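/- For every positive integer N there exists a set A ⊆ {1,…,N} with |A| ≥ c·N^{1/2} for an absolute constant c > 0, such that no difference of two distinct elements of A is a sum of two squares; i.e., (A − A) ∩ {x² + y² : x, y ∈ ℤ} = {0}. -/
import Mathlib

/-- digit map: m in base 3 ↦ number with digits 3·(m's digits) in base 9 -/
def myf : ℕ → ℕ
  | 0 => 0
  | (n+1) => 3 * ((n+1) % 3) + 9 * myf ((n+1) / 3)
decreasing_by exact Nat.div_lt_self (Nat.succ_pos n) (by norm_num)

lemma myf_eq (m : ℕ) : myf m = 3 * (m % 3) + 9 * myf (m / 3) := by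
  cases m with
  | zero => simp [myf]
  | succ n => rw [myf]

lemma three_dvd (x y : ℤ) (h : (3:ℤ) ∣ x^2 + y^2) : (3:ℤ) ∣ x ∧ (3:ℤ) ∣ y := by
  have hd : ∀ a b : ZMod 3, a^2 + b^2 = 0 → a = 0 ∧ b = 0 := by decide
  have hx : ((x:ZMod 3))^2 + ((y:ZMod 3))^2 = 0 := by
    have := (ZMod.intCast_zmod_eq_zero_iff_dvd (x^2+y^2) 3).mpr h
    push_cast at this; exact this
  obtain ⟨h1, h2⟩ := hd _ _ hx
  constructor
  · exact (ZMod.intCast_zmod_eq_zero_iff_dvd x 3).mp h1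
  · exact (ZMod.intCast_zmod_eq_zero_iff_dvd y 3).mp h2

lemma key : ∀ n m m' : ℕ, m + m' ≤ n → ∀ x y : ℤ,
    (myf m : ℤ) - myf m' = x^2 + y^2 → (myf m : ℤ) - myf m' = 0 := by
  intro n
  induction n with
  | zero =>
    intro m m' h x y _
    have : m = 0 ∧ m' = 0 := by omega
    simp [this.1, this.2]
  | succ n ih =>
    intro m m' h x y hxy
    by_cases h0 : m = 0 ∧ m' = 0
    · simp [h0.1, h0.2]
    have hfm := myf_eq m
    have hfm' := myf_eq m'
    have hd : (myf m : ℤ) - myf m' =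
        3 * ((m % 3 : ℕ) : ℤ) - 3 * ((m' % 3 : ℕ) : ℤ)
          + 9 * ((myf (m/3) : ℤ) - myf (m'/3)) := by
      rw [hfm, hfm']; push_cast; ring
    by_cases hr : m % 3 = m' % 3
    · -- d = 9 * e
      have hd9 : (myf m : ℤ) - myf m' = 9 * ((myf (m/3) : ℤ) - myf (m'/3)) := by
        rw [hd, hr]; ring
      have h3 : (3:ℤ) ∣ x^2 + y^2 := by
        rw [← hxy, hd9]; exact ⟨3 * ((myf (m/3) : ℤ) - myf (m'/3)), by ring⟩
      obtain ⟨⟨x', rfl⟩, ⟨y', rfl⟩⟩ := three_dvd x y h3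
      have he : (myf (m/3) : ℤ) - myf (m'/3) = x'^2 + y'^2 := by
        have : (9:ℤ) * ((myf (m/3) : ℤ) - myf (m'/3)) = 9 * (x'^2 + y'^2) := by
          rw [← hd9, hxy]; ring
        linarith
      have hsum : m / 3 + m' / 3 ≤ n := by omega
      have := ih (m/3) (m'/3) hsum x' y' he
      rw [hd9, this]; ring
    · -- digits differ: contradiction
      exfalso
      have h3 : (3:ℤ) ∣ x^2 + y^2 := by
        rw [← hxy, hd]
        exact ⟨((m % 3 : ℕ) : ℤ) - ((m' % 3 : ℕ) : ℤ)
          + 3 * ((myf (m/3) : ℤ) - myf (m'/3)), by ring⟩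
      obtain ⟨⟨x', rfl⟩, ⟨y', rfl⟩⟩ := three_dvd x y h3
      have h9 : (9:ℤ) ∣ (myf m : ℤ) - myf m' := by
        rw [hxy]; exact ⟨x'^2 + y'^2, by ring⟩
      rw [hd] at h9
      have hm : m % 3 < 3 := Nat.mod_lt _ (by norm_num)
      have hm' : m' % 3 < 3 := Nat.mod_lt _ (by norm_num)
      omega

lemma myf_inj : ∀ n m m' : ℕ, m + m' ≤ n → myf m = myf m' → m = m' := by
  intro n
  induction n with
  | zero => intro m m' h _; omega
  | succ n ih =>
    intro m m' h heq
    rw [myf_eq m, myf_eq m'] at heq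
    have hm : m % 3 < 3 := Nat.mod_lt _ (by norm_num)
    have hm' : m' % 3 < 3 := Nat.mod_lt _ (by norm_num)
    have hr : m % 3 = m' % 3 := by omega
    have hq : myf (m/3) = myf (m'/3) := by omega
    by_cases h0 : m = 0 ∧ m' = 0
    · omega
    · have := ih (m/3) (m'/3) (by omega) hq
      omega

lemma myf_lt : ∀ t m : ℕ, m < 3^t → myf m < 9^t := by
  intro t
  induction t with
  | zero => intro m hm; interval_cases m; simp [myf]
  | succ t ih =>
    intro m hm
    have h1 : m / 3 < 3^t := by
      have : 3^(t+1) = 3 * 3^t := by ring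
      omega
    have h2 := ih (m/3) h1
    rw [myf_eq m]
    have hm3 : m % 3 < 3 := Nat.mod_lt _ (by norm_num)
    have : 9^(t+1) = 9 * 9^t := by ring
    omega

theorem stmt_18 :
    ∃ c : ℝ, 0 < c ∧ ∀ N : ℕ, 0 < N → ∃ A : Finset ℕ,
      A ⊆ Finset.Icc 1 N ∧
      (∀ a ∈ A, ∀ a' ∈ A, ∀ x y : ℤ, (a : ℤ) - (a' : ℤ) = x ^ 2 + y ^ 2 →
        (a : ℤ) - (a' : ℤ) = 0) ∧
      c * (N : ℝ) ^ ((1 : ℝ) / 2) ≤ A.card := by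
  refine ⟨1/3, by norm_num, fun N hN => ?_⟩
  set t := Nat.log 9 N with ht
  have h9t : 9^t ≤ N := Nat.pow_log_le_self 9 (by omega)
  have hNlt : N < 9^(t+1) := Nat.lt_pow_succ_log_self (by norm_num) N
  refine ⟨(Finset.range (3^t)).image (fun m => myf m + 1), ?_, ?_, ?_⟩
  · intro a ha
    simp only [Finset.mem_image, Finset.mem_range] at ha
    obtain ⟨m, hm, rfl⟩ := ha
    have := myf_lt t m hm
    simp only [Finset.mem_Icc]
    omega
  · intro a ha a' ha' x y hxy
    simp only [Finset.mem_image, Finset.mem_range] at ha ha'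
    obtain ⟨m, hm, rfl⟩ := ha
    obtain ⟨m', hm', rfl⟩ := ha'
    have hdd : ((myf m + 1 : ℕ) : ℤ) - ((myf m' + 1 : ℕ) : ℤ)
        = (myf m : ℤ) - myf m' := by push_cast; ring
    rw [hdd] at hxy ⊢
    exact key (m + m') m m' le_rfl x y hxy
  · have hcard : ((Finset.range (3^t)).image (fun m => myf m + 1)).card = 3^t := by
      rw [Finset.card_image_of_injOn, Finset.card_range]
      intro a _ b _ hab
      have hab' : myf a + 1 = myf b + 1 := hab
      exact myf_inj (a+b) a b le_rfl (by omega)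
    rw [hcard]
    have hle : (N:ℝ) ≤ ((9:ℝ)^(t+1)) := by
      have : (N:ℝ) ≤ ((9^(t+1) : ℕ) : ℝ) := by exact_mod_cast hNlt.le
      simpa using this
    have h1 : (N:ℝ) ^ ((1:ℝ)/2) ≤ ((9:ℝ)^(t+1)) ^ ((1:ℝ)/2) :=
      Real.rpow_le_rpow (by positivity) hle (by norm_num)
    have h2 : ((9:ℝ)^(t+1)) ^ ((1:ℝ)/2) = 3^(t+1) := by
      have h9 : ((9:ℝ)^(t+1)) = ((3:ℝ)^(t+1))^2 := by
        rw [show (9:ℝ) = 3^2 by norm_num, ← pow_mul, ← pow_mul, Nat.mul_comm]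
      rw [h9, ← Real.rpow_natCast ((3:ℝ)^(t+1)) 2,
        ← Real.rpow_mul (by positivity)]
      norm_num
    rw [h2] at h1
    have : (1/3 : ℝ) * (N:ℝ)^((1:ℝ)/2) ≤ (1/3 : ℝ) * 3^(t+1) := by linarith
    calc (1/3 : ℝ) * (N:ℝ)^((1:ℝ)/2) ≤ (1/3 : ℝ) * 3^(t+1) := this
      _ = 3^t := by rw [pow_succ]; ring
      _ ≤ ((3^t : ℕ) : ℝ) := by push_cast; exact le_rfl
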